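/- Let E ⊂ ℝ³ be a solid ellipsoid of revolution with axis L(N,S), where N, S ∈ bd E. Then every inscribed cone of E with apex N is axially symmetric: for every plane Γ with Γ ∩ int E ≠ ∅ and N ∉ Γ, there exists a rotation R by angle π about some line through N with R(C_N(Γ ∩ E)) = C_N(Γ ∩ E). -/

import Mathlib

open Set Metric EuclideanGeometry Filter RealInnerProductSpace Real

noncomputable section

abbrev E2 : Type := EuclideanSpace ℝ (Fin 2)
abbrev E3 : Type := EuclideanSpace ℝ (Fin 3)

/-- A convex body: a compact convex set with nonempty interior. -/
def IsConvexBody {n : ℕ} (K : Set (EuclideanSpace ℝ (Fin n))) : Prop :=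
  Convex ℝ K ∧ IsCompact K ∧ (interior K).Nonempty

/-- The line L(p,q) through two points. -/
def lineThru {n : ℕ} (p q : EuclideanSpace ℝ (Fin n)) : Set (EuclideanSpace ℝ (Fin n)) :=
  {x | ∃ t : ℝ, x = p + t • (q - p)}

/-- The line through p with direction v. -/
def lineDir {n : ℕ} (p v : EuclideanSpace ℝ (Fin n)) : Set (EuclideanSpace ℝ (Fin n)) :=
  {x | ∃ t : ℝ, x = p + t • v}

/-- The ray from N through a. -/
def rayFrom {n : ℕ} (N a : EuclideanSpace ℝ (Fin n)) : Set (EuclideanSpace ℝ (Fin n)) :=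
  {x | ∃ t : ℝ, 0 ≤ t ∧ x = N + t • (a - N)}

/-- The hyperplane through p with normal u (a line in ℝ², a plane in ℝ³). -/
def planeNormal {n : ℕ} (p u : EuclideanSpace ℝ (Fin n)) : Set (EuclideanSpace ℝ (Fin n)) :=
  {x | ⟪x - p, u⟫ = 0}

/-- Reflection across the line through p with direction v.  In ℝ³ this map is exactly the
rotation by angle π about that line. -/
def reflAxis {n : ℕ} (p v x : EuclideanSpace ℝ (Fin n)) : EuclideanSpace ℝ (Fin n) :=
  p + ((2 * ⟪x - p, v⟫ / ⟪v, v⟫) • v - (x - p))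

/-- Reflection across the hyperplane through p with normal m. -/
def reflPlane {n : ℕ} (p m x : EuclideanSpace ℝ (Fin n)) : EuclideanSpace ℝ (Fin n) :=
  x - ((2 * ⟪x - p, m⟫ / ⟪m, m⟫) • m)

/-- The cone S_x(W) generated by W with apex x. -/
def coneHull {n : ℕ} (x : EuclideanSpace ℝ (Fin n)) (W : Set (EuclideanSpace ℝ (Fin n))) :
    Set (EuclideanSpace ℝ (Fin n)) :=
  {z | ∃ y ∈ W, ∃ l : ℝ, 0 ≤ l ∧ z = x + l • (y - x)}

/-- C_x(W), the boundary of the cone S_x(W). -/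
def coneBd {n : ℕ} (x : EuclideanSpace ℝ (Fin n)) (W : Set (EuclideanSpace ℝ (Fin n))) :
    Set (EuclideanSpace ℝ (Fin n)) := frontier (coneHull x W)

/-- P is a support hyperplane of K at S. -/
def IsSupportPlaneAt {n : ℕ} (K : Set (EuclideanSpace ℝ (Fin n))) (S : EuclideanSpace ℝ (Fin n))
    (P : Set (EuclideanSpace ℝ (Fin n))) : Prop :=
  ∃ u, u ≠ 0 ∧ P = planeNormal S u ∧ ∀ y ∈ K, ⟪y - S, u⟫ ≤ 0

/-- The stereographic property of a planar convex body K with respect to the point N and the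
support line with normal u: for every chord [a,b], reflecting a, b across the bisector B of the
angle at N between L(N,a) and L(N,b) (i.e. the line through N whose reflection maps the ray
from N through a onto the ray from N through b) yields a segment parallel to the support line
(i.e. perpendicular to its normal u). -/
def StereoProp (K : Set E2) (N u : E2) : Prop :=
  ∀ a ∈ frontier K, ∀ b ∈ frontier K, a ≠ N → b ≠ N →
    ∀ w : E2, w ≠ 0 → reflAxis N w '' rayFrom N a = rayFrom N b →
      ⟪reflAxis N w a - reflAxis N w b, u⟫ = 0

/-- f is a rotation about the line L: an orientation preserving isometry of ℝ³ fixing L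
pointwise. -/
def IsRotationAbout (f : E3 → E3) (L : Set E3) : Prop :=
  ∃ (A : E3 ≃ₗᵢ[ℝ] E3) (b : E3), (∀ x, f x = A x + b) ∧
    LinearMap.det (A.toLinearEquiv : E3 →ₗ[ℝ] E3) = 1 ∧ ∀ x ∈ L, f x = x

/-- The hypotheses of the stereographic characterization theorem (Theorem 5 of the paper):
K is a convex body, N ≠ S are boundary points, Π_S = planeNormal S u is the unique support
plane at S, Ψ is the stereographic projection from N onto Π_S, and every section K_Γ = Γ ∩ K
(Γ meeting int K, N ∉ Γ, Γ not parallel to Π_S) gives a cone C_N(K_Γ) invariant under a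
rotation R^Γ by π about some line L_Γ, with Ψ(K_Γ) = R^Γ(K'_Γ) for a homothetic copy K'_Γ of
K_Γ centered at N. -/
def StereoHyp (K : Set E3) (N S u : E3) (Ψ : E3 → E3) : Prop :=
  IsConvexBody K ∧ N ∈ frontier K ∧ S ∈ frontier K ∧ N ≠ S ∧ u ≠ 0 ∧
  IsSupportPlaneAt K S (planeNormal S u) ∧
  (∀ P, IsSupportPlaneAt K S P → P = planeNormal S u) ∧
  (∀ x ∈ K, x ≠ N → Ψ x ∈ lineThru N x ∧ Ψ x ∈ planeNormal S u) ∧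
  (∀ p w : E3, w ≠ 0 → (planeNormal p w ∩ interior K).Nonempty → N ∉ planeNormal p w →
    ¬ (∃ s : ℝ, w = s • u) →
    ∃ q v : E3, v ≠ 0 ∧
      reflAxis q v '' coneBd N (planeNormal p w ∩ K) = coneBd N (planeNormal p w ∩ K) ∧
      ∃ lam : ℝ, 0 < lam ∧
        Ψ '' (planeNormal p w ∩ K) =
          reflAxis q v '' ((fun x => N + lam • (x - N)) '' (planeNormal p w ∩ K)))

/-- The circumscribed disc of K: the closed disc of minimal radius containing K. -/
def IsCircumDisc (K : Set E2) (c : E2) (r : ℝ) : Prop :=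
  K ⊆ closedBall c r ∧ ∀ c' : E2, ∀ r' : ℝ, K ⊆ closedBall c' r' → r ≤ r'

/-- An ellipse in ℝ³: the image of the unit circle under an injective affine map. -/
def IsEllipse3 (s : Set E3) : Prop :=
  ∃ T : E2 →ᵃ[ℝ] E3, Function.Injective T ∧ s = T '' (sphere (0 : E2) 1)
/-- A solid ellipsoid of revolution with center c, axis direction w (a unit vector), semi-axis a
along w and semi-axis b in the perpendicular directions. -/
def solidEllipsoidRev (c w : E3) (a b : ℝ) : Set E3 :=
  {x | (⟪x - c, w⟫) ^ 2 / a ^ 2 + ‖(x - c) - ⟪x - c, w⟫ • w‖ ^ 2 / b ^ 2 ≤ 1}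

namespace Stmt4Aux

/-- The symmetric operator of the cone's quadratic form. -/
def opM (w u : E3) (k r s : ℝ) : E3 →ₗ[ℝ] E3 where
  toFun e := k • (⟪e, w⟫ • u + ⟪e, u⟫ • w) + r • (⟪e, w⟫ • w) + s • (e - ⟪e, w⟫ • w)
  map_add' x y := by
    simp only [inner_add_left, add_smul, smul_add, smul_sub]
    module
  map_smul' t x := by
    simp only [real_inner_smul_left, RingHom.id_apply, smul_add, smul_sub, smul_smul]
    module

lemma opM_symm (w u : E3) (k r s : ℝ) : (opM w u k r s).IsSymmetric := by
  intro x y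
  simp only [opM, LinearMap.coe_mk, AddHom.coe_mk, inner_add_left, inner_add_right,
    inner_sub_left, inner_sub_right, real_inner_smul_left, real_inner_smul_right]
  rw [real_inner_comm u y, real_inner_comm w y]
  ring

lemma inner_opM (w u : E3) (k r s : ℝ) (hw1 : ⟪w, w⟫ = (1:ℝ)) (e : E3) :
    ⟪opM w u k r s e, e⟫ = k * (2 * (⟪e, w⟫ * ⟪e, u⟫)) + r * ⟪e, w⟫ ^ 2
      + s * ‖e - ⟪e, w⟫ • w‖ ^ 2 := by
  have hns : ‖e - ⟪e, w⟫ • w‖ ^ 2 = ⟪e - ⟪e, w⟫ • w, e - ⟪e, w⟫ • w⟫ :=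
    (real_inner_self_eq_norm_sq _).symm
  rw [hns]
  simp only [opM, LinearMap.coe_mk, AddHom.coe_mk, inner_add_left, inner_sub_left,
    inner_sub_right, real_inner_smul_left, real_inner_smul_right]
  rw [real_inner_comm w e, real_inner_comm u e, hw1]
  ring

lemma reflAxis_red {n : ℕ} (p v z : EuclideanSpace ℝ (Fin n)) :
    reflAxis p v (p + z) = p + ((2 * ⟪z, v⟫ / ⟪v, v⟫) • v - z) := by
  simp [reflAxis, add_sub_cancel_left]

lemma reflAxis_invol {n : ℕ} (p v : EuclideanSpace ℝ (Fin n)) (hv : ⟪v, v⟫ ≠ (0:ℝ)) (x) :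
    reflAxis p v (reflAxis p v x) = x := by
  have hx : x = p + (x - p) := by abel
  rw [hx, reflAxis_red, reflAxis_red]
  congr 1
  have h1 : ⟪(2 * ⟪x - p, v⟫ / ⟪v, v⟫) • v - (x - p), v⟫
      = 2 * ⟪x - p, v⟫ / ⟪v, v⟫ * ⟪v, v⟫ - ⟪x - p, v⟫ := by
    rw [inner_sub_left, real_inner_smul_left]
  rw [h1, div_mul_cancel₀ _ hv]
  have h2 : 2 * ⟪x - p, v⟫ - ⟪x - p, v⟫ = ⟪x - p, v⟫ := by ring
  rw [h2]
  abel

lemma reflAxis_continuous {n : ℕ} (p v : EuclideanSpace ℝ (Fin n)) :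
    Continuous (reflAxis p v) := by
  unfold reflAxis
  fun_prop

lemma reflAxis_image_frontier {n : ℕ} (p v : EuclideanSpace ℝ (Fin n))
    (hv : ⟪v, v⟫ ≠ (0:ℝ)) {S : Set (EuclideanSpace ℝ (Fin n))}
    (h : reflAxis p v '' S = S) : reflAxis p v '' frontier S = frontier S := by
  let φ : EuclideanSpace ℝ (Fin n) ≃ₜ EuclideanSpace ℝ (Fin n) :=
    { toFun := reflAxis p v
      invFun := reflAxis p v
      left_inv := reflAxis_invol p v hv
      right_inv := reflAxis_invol p v hv
      continuous_toFun := reflAxis_continuous p v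
      continuous_invFun := reflAxis_continuous p v }
  have := φ.image_frontier S
  simpa [φ, h] using this


lemma gq_convex (w : E3) (a b : ℝ) (ha : 0 < a) (hb : 0 < b)
    (d1 d2 : E3) (s t : ℝ) (hs : 0 ≤ s) (ht : 0 ≤ t) (hst : s + t = 1) :
    2 * ⟪s • d1 + t • d2, w⟫ / a + ⟪s • d1 + t • d2, w⟫ ^ 2 / a ^ 2
      + ‖(s • d1 + t • d2) - ⟪s • d1 + t • d2, w⟫ • w‖ ^ 2 / b ^ 2
    ≤ s * (2 * ⟪d1, w⟫ / a + ⟪d1, w⟫ ^ 2 / a ^ 2 + ‖d1 - ⟪d1, w⟫ • w‖ ^ 2 / b ^ 2)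
      + t * (2 * ⟪d2, w⟫ / a + ⟪d2, w⟫ ^ 2 / a ^ 2 + ‖d2 - ⟪d2, w⟫ • w‖ ^ 2 / b ^ 2) := by
  have hiw : ⟪s • d1 + t • d2, w⟫ = s * ⟪d1, w⟫ + t * ⟪d2, w⟫ := by
    rw [inner_add_left, real_inner_smul_left, real_inner_smul_left]
  have hz : (s • d1 + t • d2) - (s * ⟪d1, w⟫ + t * ⟪d2, w⟫) • w
      = s • (d1 - ⟪d1, w⟫ • w) + t • (d2 - ⟪d2, w⟫ • w) := by
    rw [add_smul, smul_sub, smul_sub, smul_smul, smul_smul]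
    abel
  rw [hiw, hz]
  set s1 : ℝ := ⟪d1, w⟫
  set s2 : ℝ := ⟪d2, w⟫
  set z1 : E3 := d1 - s1 • w
  set z2 : E3 := d2 - s2 • w
  have key1 : (s * s1 + t * s2) ^ 2 ≤ s * s1 ^ 2 + t * s2 ^ 2 := by
    nlinarith [sq_nonneg (s1 - s2), mul_nonneg hs ht]
  have key2 : ‖s • z1 + t • z2‖ ^ 2 ≤ s * ‖z1‖ ^ 2 + t * ‖z2‖ ^ 2 := by
    have hexp : ‖s • z1 + t • z2‖ ^ 2 = s ^ 2 * ‖z1‖ ^ 2 + 2 * (s * t * ⟪z1, z2⟫)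
        + t ^ 2 * ‖z2‖ ^ 2 := by
      rw [norm_add_sq_real, norm_smul, norm_smul, real_inner_smul_left,
        real_inner_smul_right, mul_pow, mul_pow, Real.norm_eq_abs, Real.norm_eq_abs,
        sq_abs, sq_abs]
      ring
    rw [hexp]
    nlinarith [real_inner_le_norm z1 z2, mul_nonneg hs ht, sq_nonneg (‖z1‖ - ‖z2‖),
      norm_nonneg z1, norm_nonneg z2]
  have hA2 : (0:ℝ) < a ^ 2 := by positivity
  have hB2 : (0:ℝ) < b ^ 2 := by positivity
  have k1 : (s * s1 + t * s2) ^ 2 / a ^ 2 ≤ (s * s1 ^ 2 + t * s2 ^ 2) / a ^ 2 := by gcongr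
  have k2 : ‖s • z1 + t • z2‖ ^ 2 / b ^ 2 ≤ (s * ‖z1‖ ^ 2 + t * ‖z2‖ ^ 2) / b ^ 2 := by gcongr
  have lin : 2 * (s * s1 + t * s2) / a = s * (2 * s1 / a) + t * (2 * s2 / a) := by ring
  have e1 : s * (s1 ^ 2 / a ^ 2) + t * (s2 ^ 2 / a ^ 2)
      = (s * s1 ^ 2 + t * s2 ^ 2) / a ^ 2 := by ring
  have e2 : s * (‖z1‖ ^ 2 / b ^ 2) + t * (‖z2‖ ^ 2 / b ^ 2)
      = (s * ‖z1‖ ^ 2 + t * ‖z2‖ ^ 2) / b ^ 2 := by ring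
  linarith

lemma div_pos_of_mul_pos {α x : ℝ} (hα : α ≠ 0) (h : 0 < α * x) : 0 < x / α := by
  rcases lt_or_gt_of_ne hα with h1 | h1
  · have h9 : x < 0 := by nlinarith
    exact div_pos_of_neg_of_neg h9 h1
  · have h9 : 0 < x := by nlinarith
    exact div_pos h9 h1

lemma cone_convex (u : E3) (α : ℝ) (hα : α ≠ 0) (Qf G : E3 → ℝ)
    (hscale : ∀ (l : ℝ) (d : E3), ⟪d, u⟫ = α → Qf (l • d) = l ^ 2 * G d)
    (hGconv : ∀ (d1 d2 : E3) (s t : ℝ), 0 ≤ s → 0 ≤ t → s + t = 1 →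
      G (s • d1 + t • d2) ≤ s * G d1 + t * G d2) :
    Convex ℝ {e : E3 | Qf e ≤ 0 ∧ 0 < α * ⟪e, u⟫} := by
  intro e1 he1 e2 he2 s t hs ht hst
  obtain ⟨hQ1, hm1⟩ := he1
  obtain ⟨hQ2, hm2⟩ := he2
  set l1 : ℝ := ⟪e1, u⟫ / α with hl1_def
  set l2 : ℝ := ⟪e2, u⟫ / α with hl2_def
  have hl1 : 0 < l1 := div_pos_of_mul_pos hα hm1
  have hl2 : 0 < l2 := div_pos_of_mul_pos hα hm2
  have heu1 : ⟪e1, u⟫ = l1 * α := by rw [hl1_def]; field_simp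
  have heu2 : ⟪e2, u⟫ = l2 * α := by rw [hl2_def]; field_simp
  have hd1u : ⟪l1⁻¹ • e1, u⟫ = α := by
    rw [real_inner_smul_left, heu1]
    field_simp
  have hd2u : ⟪l2⁻¹ • e2, u⟫ = α := by
    rw [real_inner_smul_left, heu2]
    field_simp
  have hG1 : G (l1⁻¹ • e1) ≤ 0 := by
    have h1 := hscale l1 _ hd1u
    rw [smul_smul, mul_inv_cancel₀ (ne_of_gt hl1), one_smul] at h1
    nlinarith [pow_pos hl1 2]
  have hG2 : G (l2⁻¹ • e2) ≤ 0 := by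
    have h1 := hscale l2 _ hd2u
    rw [smul_smul, mul_inv_cancel₀ (ne_of_gt hl2), one_smul] at h1
    nlinarith [pow_pos hl2 2]
  set L : ℝ := s * l1 + t * l2 with hL_def
  have hL : 0 < L := by
    rcases eq_or_lt_of_le hs with h | h
    · have hts : t = 1 := by linarith
      rw [hL_def, ← h, hts]
      simpa using hl2
    · have h1 : 0 < s * l1 := mul_pos h hl1
      have h2 : 0 ≤ t * l2 := mul_nonneg ht (le_of_lt hl2)
      rw [hL_def]
      linarith
  have hL' : L ≠ 0 := ne_of_gt hL
  set σ : ℝ := s * l1 / L with hσ_def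
  set τ : ℝ := t * l2 / L with hτ_def
  have hσ : 0 ≤ σ := div_nonneg (mul_nonneg hs (le_of_lt hl1)) (le_of_lt hL)
  have hτ : 0 ≤ τ := div_nonneg (mul_nonneg ht (le_of_lt hl2)) (le_of_lt hL)
  have hστ : σ + τ = 1 := by
    rw [hσ_def, hτ_def, hL_def]
    field_simp
    exact div_self hL'
  have hdu : ⟪σ • (l1⁻¹ • e1) + τ • (l2⁻¹ • e2), u⟫ = α := by
    rw [inner_add_left, real_inner_smul_left (l1⁻¹ • e1) u σ,
      real_inner_smul_left (l2⁻¹ • e2) u τ, hd1u, hd2u]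
    linear_combination α * hστ
  have hσL : L • (σ • (l1⁻¹ • e1)) = s • e1 := by
    rw [smul_smul, smul_smul, hσ_def]
    congr 1
    field_simp
  have hτL : L • (τ • (l2⁻¹ • e2)) = t • e2 := by
    rw [smul_smul, smul_smul, hτ_def]
    congr 1
    field_simp
  have hLd : L • (σ • (l1⁻¹ • e1) + τ • (l2⁻¹ • e2)) = s • e1 + t • e2 := by
    rw [smul_add, hσL, hτL]
  have hGd : G (σ • (l1⁻¹ • e1) + τ • (l2⁻¹ • e2)) ≤ 0 := by
    have h1 := hGconv (l1⁻¹ • e1) (l2⁻¹ • e2) σ τ hσ hτ hστ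
    nlinarith [mul_nonneg hσ (neg_nonneg.mpr hG1), mul_nonneg hτ (neg_nonneg.mpr hG2)]
  constructor
  · show Qf (s • e1 + t • e2) ≤ 0
    rw [← hLd, hscale L _ hdu]
    nlinarith [sq_nonneg L]
  · show 0 < α * ⟪s • e1 + t • e2, u⟫
    rw [← hLd, real_inner_smul_left, hdu]
    have h5 : α * (L * α) = L * (α * α) := by ring
    rw [h5]
    exact mul_pos hL (mul_self_pos.mpr hα)

lemma main_abstract (u : E3) (α : ℝ) (hα : α ≠ 0) (M : E3 →ₗ[ℝ] E3) (hM : M.IsSymmetric)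
    (hpoint : ∀ e : E3, ⟪M e, e⟫ ≤ 0 → ⟪e, u⟫ = 0 → e = 0)
    (hconv : Convex ℝ {e : E3 | ⟪M e, e⟫ ≤ 0 ∧ 0 < α * ⟪e, u⟫})
    (e0 : E3) (he0 : ⟪M e0, e0⟫ ≤ 0 ∧ 0 < α * ⟪e0, u⟫) :
    ∃ v : E3, ⟪v, v⟫ = (1:ℝ) ∧
      (fun e => (2 * ⟪e, v⟫ / ⟪v, v⟫) • v - e) '' {e : E3 | ⟪M e, e⟫ ≤ 0 ∧ 0 ≤ α * ⟪e, u⟫}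
        = {e : E3 | ⟪M e, e⟫ ≤ 0 ∧ 0 ≤ α * ⟪e, u⟫} := by
  classical
  have hrank : Module.finrank ℝ E3 = 3 := by
    simp [finrank_euclideanSpace]
  set bv := hM.eigenvectorBasis hrank with hbv
  have hunit : ∀ i, ⟪bv i, bv i⟫ = (1:ℝ) := by
    intro i
    rw [real_inner_self_eq_norm_sq, bv.orthonormal.1 i]
    norm_num
  obtain ⟨R, hRapp⟩ : ∃ R : Fin 3 → E3 → E3,
      ∀ i e, R i e = (2 * ⟪e, bv i⟫ / ⟪bv i, bv i⟫) • bv i - e := ⟨_, fun i e => rfl⟩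
  have hRapp' : ∀ i e, R i e = (2 * ⟪e, bv i⟫) • bv i - e := by
    intro i e
    rw [hRapp, hunit, div_one]
  have heig : ∀ i, M (bv i) = hM.eigenvalues hrank i • bv i := by
    intro i
    exact_mod_cast hM.apply_eigenvectorBasis hrank i
  have hQR : ∀ i e, ⟪M (R i e), R i e⟫ = ⟪M e, e⟫ := by
    intro i e
    have hsymm : ⟪M e, bv i⟫ = hM.eigenvalues hrank i * ⟪e, bv i⟫ := by
      rw [hM e (bv i), heig i, real_inner_smul_right]
    rw [hRapp', map_sub, map_smul, heig i]
    simp only [inner_sub_left, inner_sub_right, real_inner_smul_left, real_inner_smul_right,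
      smul_smul]
    rw [hsymm, hunit i, real_inner_comm (bv i) e]
    ring
  have hRinv : ∀ i e, R i (R i e) = e := by
    intro i e
    have h1 : ⟪R i e, bv i⟫ = ⟪e, bv i⟫ := by
      rw [hRapp', inner_sub_left, real_inner_smul_left, hunit i]
      ring
    rw [hRapp' i (R i e), h1, hRapp']
    abel
  have hRzero : ∀ i, R i 0 = 0 := by
    intro i
    rw [hRapp']
    simp
  have hRne : ∀ i e, e ≠ 0 → R i e ≠ 0 := by
    intro i e h he
    exact h (by rw [← hRinv i e, he, hRzero])
  have hRneg : ∀ i e, R i (-e) = - R i e := by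
    intro i e
    rw [hRapp', hRapp', inner_neg_left]
    module
  have hRcont : ∀ i, Continuous (R i) := by
    intro i
    have h1 : R i = fun e => (2 * ⟪e, bv i⟫ / ⟪bv i, bv i⟫) • bv i - e := funext (hRapp i)
    rw [h1]
    fun_prop
  set Kp0 : Set E3 := {e : E3 | ⟪M e, e⟫ ≤ 0 ∧ 0 < α * ⟪e, u⟫} with hKp0_def
  have hdich : ∀ i, (∀ e ∈ Kp0, 0 < α * ⟪R i e, u⟫) ∨ (∀ e ∈ Kp0, α * ⟪R i e, u⟫ < 0) := by
    intro i
    have hcont : Continuous fun e : E3 => α * ⟪e, u⟫ :=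
      continuous_const.mul (continuous_id.inner continuous_const)
    have hUopen : IsOpen {e : E3 | 0 < α * ⟪e, u⟫} := isOpen_lt continuous_const hcont
    have hVopen : IsOpen {e : E3 | α * ⟪e, u⟫ < 0} := isOpen_lt hcont continuous_const
    have hdisj : Disjoint {e : E3 | 0 < α * ⟪e, u⟫} {e : E3 | α * ⟪e, u⟫ < 0} := by
      rw [Set.disjoint_left]
      intro e h1 h2
      simp only [Set.mem_setOf_eq] at h1 h2
      linarith
    have hsub : R i '' Kp0 ⊆ {e : E3 | 0 < α * ⟪e, u⟫} ∪ {e : E3 | α * ⟪e, u⟫ < 0} := by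
      rintro - ⟨e, he, rfl⟩
      have hene : e ≠ 0 := by
        intro h
        have h2 := he.2
        rw [h, inner_zero_left, mul_zero] at h2
        exact lt_irrefl 0 h2
      have h1 : ⟪M (R i e), R i e⟫ ≤ 0 := by rw [hQR]; exact he.1
      have h3 : ⟪R i e, u⟫ ≠ 0 := fun h => hRne i e hene (hpoint _ h1 h)
      rcases (mul_ne_zero hα h3 : α * ⟪R i e, u⟫ ≠ 0).lt_or_gt with h | h
      · right; exact h
      · left; exact h
    have hpre : IsPreconnected (R i '' Kp0) :=
      (hconv.isPreconnected).image _ (hRcont i).continuousOn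
    rcases hpre.subset_or_subset hUopen hVopen hdisj hsub with h | h
    · left; intro e he; exact h ⟨e, he, rfl⟩
    · right; intro e he; exact h ⟨e, he, rfl⟩
  by_cases hex : ∃ i, ∀ e ∈ Kp0, 0 < α * ⟪R i e, u⟫
  · obtain ⟨i, hi⟩ := hex
    refine ⟨bv i, hunit i, ?_⟩
    have hfun : (fun e : E3 => (2 * ⟪e, bv i⟫ / ⟪bv i, bv i⟫) • bv i - e) = R i :=
      funext fun e => (hRapp i e).symm
    rw [hfun]
    have hKpR : ∀ e : E3, ⟪M e, e⟫ ≤ 0 → 0 ≤ α * ⟪e, u⟫ →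
        ⟪M (R i e), R i e⟫ ≤ 0 ∧ 0 ≤ α * ⟪R i e, u⟫ := by
      intro e h1 h2
      by_cases hez : e = 0
      · rw [hez, hRzero]
        constructor
        · rw [map_zero, inner_zero_left]
        · simp
      · have hlt : 0 < α * ⟪e, u⟫ := by
          rcases eq_or_lt_of_le h2 with h | h
          · exfalso
            apply hez
            apply hpoint e h1
            rcases mul_eq_zero.mp h.symm with h' | h'
            · exact absurd h' hα
            · exact h'
          · exact h
        exact ⟨by rw [hQR]; exact h1, le_of_lt (hi e ⟨h1, hlt⟩)⟩
    ext z
    simp only [Set.mem_image, Set.mem_setOf_eq]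
    constructor
    · rintro ⟨e, ⟨h1, h2⟩, rfl⟩
      exact hKpR e h1 h2
    · intro hz
      exact ⟨R i z, hKpR z hz.1 hz.2, hRinv i z⟩
  · push_neg at hex
    have hneg : ∀ i, ∀ e ∈ Kp0, α * ⟪R i e, u⟫ < 0 := by
      intro i
      refine (hdich i).resolve_left ?_
      intro hall
      obtain ⟨e, he, hn⟩ := hex i
      exact absurd (hall e he) (not_lt.mpr hn)
    exfalso
    have h1 : α * ⟪R 1 e0, u⟫ < 0 := hneg 1 e0 he0
    have hQ1 : ⟪M (R 1 e0), R 1 e0⟫ ≤ 0 := by rw [hQR]; exact he0.1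
    have hm : -R 1 e0 ∈ Kp0 := by
      constructor
      · show ⟪M (-R 1 e0), -R 1 e0⟫ ≤ 0
        rw [map_neg, inner_neg_neg]
        exact hQ1
      · show 0 < α * ⟪-R 1 e0, u⟫
        rw [inner_neg_left]
        nlinarith
    have h2 : α * ⟪R 0 (-R 1 e0), u⟫ < 0 := hneg 0 _ hm
    rw [hRneg, inner_neg_left] at h2
    have h3 : 0 < α * ⟪R 0 (R 1 e0), u⟫ := by nlinarith
    have hcomp : R 0 (R 1 e0) = R 2 e0 := by
      have horth : ⟪bv 1, bv 0⟫ = (0:ℝ) := bv.orthonormal.2 (by decide)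
      have key : ∀ (x : E3) (c0 c1 c2 : ℝ), c0 • bv 0 + c1 • bv 1 + c2 • bv 2 = x →
          ⟪x, bv 0⟫ = c0 → ⟪x, bv 1⟫ = c1 → ⟪x, bv 2⟫ = c2 → R 0 (R 1 x) = R 2 x := by
        intro x c0 c1 c2 hsum h0 h1' h2'
        have hin : ⟪R 1 x, bv 0⟫ = -c0 := by
          rw [hRapp', inner_sub_left, real_inner_smul_left, horth, h0]
          ring
        rw [hRapp' 0 (R 1 x), hin, hRapp' 1 x, hRapp' 2 x, h1', h2', ← hsum]
        module
      have h := bv.sum_repr' e0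
      rw [Fin.sum_univ_three] at h
      exact key e0 _ _ _ h (by rw [real_inner_comm]) (by rw [real_inner_comm])
        (by rw [real_inner_comm])
    rw [hcomp] at h3
    have h4 := hneg 2 e0 he0
    linarith

end Stmt4Aux

set_option maxHeartbeats 800000 in
/-- All inscribed cones of a solid ellipsoid of revolution with apex at the
axis endpoint N are axially symmetric (invariant under a rotation by π about some line
through N). -/
theorem stmt4 (c w : E3) (a b : ℝ) (hw : ‖w‖ = 1) (ha : 0 < a) (hb : 0 < b)
    (N S : E3) (hN : N = c + a • w) (hS : S = c - a • w) :
    ∀ p u : E3, u ≠ 0 →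
      (planeNormal p u ∩ interior (solidEllipsoidRev c w a b)).Nonempty →
      N ∉ planeNormal p u →
      ∃ v : E3, v ≠ 0 ∧
        reflAxis N v '' coneBd N (planeNormal p u ∩ solidEllipsoidRev c w a b) =
          coneBd N (planeNormal p u ∩ solidEllipsoidRev c w a b) := by
  intro p u hu hne hNp
  classical
  obtain ⟨x0, hx0P, hx0int⟩ := hne
  have ha' : (a:ℝ) ≠ 0 := ne_of_gt ha
  have hb' : (b:ℝ) ≠ 0 := ne_of_gt hb
  have hw1 : ⟪w, w⟫ = (1:ℝ) := by
    rw [real_inner_self_eq_norm_sq, hw]; norm_num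
  set α : ℝ := ⟪p - N, u⟫ with hα_def
  have hα : α ≠ 0 := by
    intro h
    apply hNp
    show ⟪N - p, u⟫ = 0
    have h2 : N - p = -(p - N) := by abel
    rw [h2, inner_neg_left, ← hα_def, h, neg_zero]
  obtain ⟨M, hMsym, hQ⟩ : ∃ M : E3 →ₗ[ℝ] E3, M.IsSymmetric ∧
      ∀ e : E3, ⟪M e, e⟫ = 2 * ⟪e, w⟫ * ⟪e, u⟫ / (a * α) + ⟪e, w⟫ ^ 2 / a ^ 2
        + ‖e - ⟪e, w⟫ • w‖ ^ 2 / b ^ 2 := by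
    refine ⟨Stmt4Aux.opM w u (1 / (a * α)) (1 / a ^ 2) (1 / b ^ 2),
      Stmt4Aux.opM_symm w u _ _ _, fun e => ?_⟩
    rw [Stmt4Aux.inner_opM w u _ _ _ hw1 e]
    ring
  obtain ⟨G, hGapp⟩ : ∃ G : E3 → ℝ, ∀ d : E3, G d = 2 * ⟪d, w⟫ / a + ⟪d, w⟫ ^ 2 / a ^ 2
      + ‖d - ⟪d, w⟫ • w‖ ^ 2 / b ^ 2 := ⟨_, fun d => rfl⟩
  -- membership in the ellipsoid
  have hmemE : ∀ d : E3, (N + d ∈ solidEllipsoidRev c w a b) ↔ G d ≤ 0 := by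
    intro d
    have h1 : N + d - c = a • w + d := by rw [hN]; abel
    have h2 : ⟪N + d - c, w⟫ = a + ⟪d, w⟫ := by
      rw [h1, inner_add_left, real_inner_smul_left, hw1]; ring
    have h3 : N + d - c - (a + ⟪d, w⟫) • w = d - ⟪d, w⟫ • w := by
      rw [h1, add_smul]; abel
    show ((⟪N + d - c, w⟫) ^ 2 / a ^ 2 + ‖(N + d - c) - ⟪N + d - c, w⟫ • w‖ ^ 2 / b ^ 2 ≤ 1)
      ↔ G d ≤ 0
    rw [h2, h3, hGapp]
    have expand : (a + ⟪d, w⟫) ^ 2 / a ^ 2 = 1 + (2 * ⟪d, w⟫ / a + ⟪d, w⟫ ^ 2 / a ^ 2) := by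
      field_simp
      ring
    rw [expand]
    constructor <;> intro h <;> linarith
  -- scaling identity
  have hscale : ∀ (l : ℝ) (d : E3), ⟪d, u⟫ = α → ⟪M (l • d), l • d⟫ = l ^ 2 * G d := by
    intro l d hdu
    rw [hQ, hGapp]
    have h1 : ⟪l • d, w⟫ = l * ⟪d, w⟫ := real_inner_smul_left _ _ _
    have h2 : ⟪l • d, u⟫ = l * α := by rw [real_inner_smul_left, hdu]
    have h3 : l • d - (l * ⟪d, w⟫) • w = l • (d - ⟪d, w⟫ • w) := by
      rw [smul_sub, smul_smul]
    have h4 : ‖l • (d - ⟪d, w⟫ • w)‖ ^ 2 = l ^ 2 * ‖d - ⟪d, w⟫ • w‖ ^ 2 := by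
      rw [norm_smul, Real.norm_eq_abs, mul_pow, sq_abs]
    rw [h1, h2, h3, h4]
    field_simp
  -- pointedness
  have hpoint : ∀ e : E3, ⟪M e, e⟫ ≤ 0 → ⟪e, u⟫ = 0 → e = 0 := by
    intro e hQe heu
    rw [hQ, heu] at hQe
    rw [mul_zero, zero_div, zero_add] at hQe
    have t1 : 0 ≤ ⟪e, w⟫ ^ 2 / a ^ 2 := by positivity
    have t2 : 0 ≤ ‖e - ⟪e, w⟫ • w‖ ^ 2 / b ^ 2 := by positivity
    have hz1 : ⟪e, w⟫ ^ 2 / a ^ 2 = 0 := by linarith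
    have hz2 : ‖e - ⟪e, w⟫ • w‖ ^ 2 / b ^ 2 = 0 := by linarith
    have hew : ⟪e, w⟫ = 0 := by
      have h5 := (div_eq_zero_iff.mp hz1).resolve_right (by positivity)
      exact pow_eq_zero_iff (n := 2) (by norm_num) |>.mp h5
    have hnorm : ‖e - ⟪e, w⟫ • w‖ = 0 := by
      have h5 := (div_eq_zero_iff.mp hz2).resolve_right (by positivity)
      exact pow_eq_zero_iff (n := 2) (by norm_num) |>.mp h5
    have h6 := norm_eq_zero.mp hnorm
    rw [hew, zero_smul, sub_zero] at h6
    exact h6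
  -- x0 facts
  have hx0E : x0 ∈ solidEllipsoidRev c w a b := interior_subset hx0int
  have hx0u : ⟪x0 - N, u⟫ = α := by
    have hx0P' : ⟪x0 - p, u⟫ = 0 := hx0P
    have h7 : x0 - N = (x0 - p) + (p - N) := by abel
    rw [h7, inner_add_left, hx0P', zero_add, hα_def]
  have he0 : ⟪M (x0 - N), x0 - N⟫ ≤ 0 ∧ 0 < α * ⟪x0 - N, u⟫ := by
    constructor
    · have h1 : ⟪M ((1:ℝ) • (x0 - N)), (1:ℝ) • (x0 - N)⟫ = 1 ^ 2 * G (x0 - N) :=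
        hscale 1 _ hx0u
      rw [one_smul, one_pow, one_mul] at h1
      rw [h1, ← hmemE]
      have h8 : N + (x0 - N) = x0 := by abel
      rw [h8]; exact hx0E
    · rw [hx0u]
      exact mul_self_pos.mpr hα
  -- cone characterization
  have hcone : coneHull N (planeNormal p u ∩ solidEllipsoidRev c w a b)
      = (fun e => N + e) '' {e : E3 | ⟪M e, e⟫ ≤ 0 ∧ 0 ≤ α * ⟪e, u⟫} := by
    ext z
    constructor
    · rintro ⟨y, ⟨hyP, hyE⟩, l, hl, rfl⟩
      have hdu : ⟪y - N, u⟫ = α := by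
        have hyP' : ⟪y - p, u⟫ = 0 := hyP
        have h7 : y - N = (y - p) + (p - N) := by abel
        rw [h7, inner_add_left, hyP', zero_add, hα_def]
      have hGd : G (y - N) ≤ 0 := by
        rw [← hmemE]
        have h8 : N + (y - N) = y := by abel
        rw [h8]; exact hyE
      refine ⟨l • (y - N), ⟨?_, ?_⟩, rfl⟩
      · rw [hscale l _ hdu]
        nlinarith
      · rw [real_inner_smul_left, hdu]
        nlinarith [mul_self_nonneg α]
    · rintro ⟨e, ⟨hQe, hpos⟩, rfl⟩
      by_cases heu : ⟪e, u⟫ = 0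
      · have he0' : e = 0 := hpoint e hQe heu
        exact ⟨x0, ⟨hx0P, hx0E⟩, 0, le_refl 0, by rw [he0']; simp⟩
      · have hmul : 0 < α * ⟪e, u⟫ := lt_of_le_of_ne hpos (fun h => heu (by
          rcases mul_eq_zero.mp h.symm with h' | h'
          · exact absurd h' hα
          · exact h'))
        set l : ℝ := ⟪e, u⟫ / α with hl_def
        have hl : 0 < l := Stmt4Aux.div_pos_of_mul_pos hα hmul
        have hl' : l ≠ 0 := ne_of_gt hl
        have heu' : ⟪e, u⟫ = l * α := by rw [hl_def]; field_simp
        have hdu : ⟪l⁻¹ • e, u⟫ = α := by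
          rw [real_inner_smul_left, heu']
          field_simp
        have hld : l • (l⁻¹ • e) = e := by
          rw [smul_smul, mul_inv_cancel₀ hl', one_smul]
        have hGd : G (l⁻¹ • e) ≤ 0 := by
          have h1 : ⟪M (l • (l⁻¹ • e)), l • (l⁻¹ • e)⟫ = l ^ 2 * G (l⁻¹ • e) :=
            hscale l _ hdu
          rw [hld] at h1
          nlinarith [pow_pos hl 2]
        refine ⟨N + l⁻¹ • e, ⟨?_, ?_⟩, l, le_of_lt hl, ?_⟩
        · show ⟪N + l⁻¹ • e - p, u⟫ = 0
          have h7 : N + l⁻¹ • e - p = l⁻¹ • e - (p - N) := by abel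
          rw [h7, inner_sub_left, hdu, ← hα_def]
          ring
        · rw [hmemE]; exact hGd
        · have h7 : N + l⁻¹ • e - N = l⁻¹ • e := by abel
          rw [h7, hld]
  -- convexity
  have hGconv : ∀ (d1 d2 : E3) (s t : ℝ), 0 ≤ s → 0 ≤ t → s + t = 1 →
      G (s • d1 + t • d2) ≤ s * G d1 + t * G d2 := by
    intro d1 d2 s t hs ht hst
    rw [hGapp, hGapp, hGapp]
    exact Stmt4Aux.gq_convex w a b ha hb d1 d2 s t hs ht hst
  have hKp0conv : Convex ℝ {e : E3 | ⟪M e, e⟫ ≤ 0 ∧ 0 < α * ⟪e, u⟫} :=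
    Stmt4Aux.cone_convex u α hα (fun e => ⟪M e, e⟫) G hscale hGconv
  -- apply the abstract lemma
  obtain ⟨v, hv1, hvimg⟩ :=
    Stmt4Aux.main_abstract u α hα M hMsym hpoint hKp0conv (x0 - N) he0
  have hv0 : ⟪v, v⟫ ≠ (0:ℝ) := by rw [hv1]; norm_num
  have hvne : v ≠ 0 := by
    intro h
    rw [h, inner_zero_left] at hv1
    exact one_ne_zero hv1.symm
  refine ⟨v, hvne, ?_⟩
  have hcompfun : (reflAxis N v) ∘ (fun e : E3 => N + e)
      = (fun e : E3 => N + e) ∘ (fun e : E3 => (2 * ⟪e, v⟫ / ⟪v, v⟫) • v - e) := by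
    funext e
    show reflAxis N v (N + e) = N + ((2 * ⟪e, v⟫ / ⟪v, v⟫) • v - e)
    exact Stmt4Aux.reflAxis_red N v e
  have hφcone : reflAxis N v '' coneHull N (planeNormal p u ∩ solidEllipsoidRev c w a b)
      = coneHull N (planeNormal p u ∩ solidEllipsoidRev c w a b) := by
    rw [hcone, ← Set.image_comp, hcompfun, Set.image_comp, hvimg]
  exact Stmt4Aux.reflAxis_image_frontier N v hv0 hφcone
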